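/- Assume in addition that the eigenvalue E₀ of H is simple, i.e. every v ∈ ℋ with Hv = E₀v is a scalar multiple of ψ₀. Suppose there exists ℓ ∈ ℂ with nonzero imaginary part such that ⟨P̄₀(Wψ₀), R(ε)(P̄₀(Wψ₀))⟩ → ℓ as ε → 0⁺. Then for no δ > 0 do there exist functions E : ℝ → ℝ and ψ : ℝ → ℋ, twice differentiable on [0,δ) (one-sided derivatives at 0), with E(0) = E₀, ψ(0) = ψ₀ and (H + λW)ψ(λ) = E(λ)·ψ(λ) for all λ ∈ [0,δ). -/

import Mathlib

open Set Filter Topology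

/-- Instability of the bound state: if the Fermi golden rule limit
`lim_{ε→0⁺} ⟪P̄₀(Wψ₀), R(ε) P̄₀(Wψ₀)⟫` exists and has nonzero imaginary part, then no twice
differentiable eigenvalue branch `λ ↦ (E(λ), ψ(λ))` through `(E₀, ψ₀)` exists. -/
theorem stmt_2 {ℋ : Type*} [NormedAddCommGroup ℋ] [InnerProductSpace ℂ ℋ] [CompleteSpace ℋ]
    (H W : ℋ →L[ℂ] ℋ) (hH : IsSelfAdjoint H) (hW : IsSelfAdjoint W)
    (E₀ : ℝ) (ψ₀ : ℋ) (hψ₀ : ‖ψ₀‖ = 1) (hEig : H ψ₀ = (E₀ : ℂ) • ψ₀)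
    (hSimple : ∀ v : ℋ, H v = (E₀ : ℂ) • v → ∃ c : ℂ, v = c • ψ₀)
    (R : ℝ → (ℋ →L[ℂ] ℋ))
    (hR : ∀ ε : ℝ, 0 < ε →
      (H - ((E₀ : ℂ) + (ε : ℂ) * Complex.I) • (1 : ℋ →L[ℂ] ℋ)) * R ε = 1 ∧
      R ε * (H - ((E₀ : ℂ) + (ε : ℂ) * Complex.I) • (1 : ℋ →L[ℂ] ℋ)) = 1)
    (ℓ : ℂ) (hℓ : ℓ.im ≠ 0)
    (hlim : Tendsto (fun ε : ℝ =>
        (inner ℂ (W ψ₀ - (inner ℂ ψ₀ (W ψ₀) : ℂ) • ψ₀)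
          (R ε (W ψ₀ - (inner ℂ ψ₀ (W ψ₀) : ℂ) • ψ₀)) : ℂ))
      (𝓝[>] (0 : ℝ)) (𝓝 ℓ)) :
    ¬ ∃ δ : ℝ, 0 < δ ∧
      ∃ (E : ℝ → ℝ) (ψ : ℝ → ℋ) (E' : ℝ → ℝ) (ψ' : ℝ → ℋ) (E'' : ℝ → ℝ) (ψ'' : ℝ → ℋ),
        E 0 = E₀ ∧ ψ 0 = ψ₀ ∧
        (∀ lam ∈ Ico (0:ℝ) δ, (H + (lam : ℂ) • W) (ψ lam) = (E lam : ℂ) • ψ lam) ∧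
        (∀ lam ∈ Ico (0:ℝ) δ, HasDerivWithinAt E (E' lam) (Ico (0:ℝ) δ) lam) ∧
        (∀ lam ∈ Ico (0:ℝ) δ, HasDerivWithinAt ψ (ψ' lam) (Ico (0:ℝ) δ) lam) ∧
        (∀ lam ∈ Ico (0:ℝ) δ, HasDerivWithinAt E' (E'' lam) (Ico (0:ℝ) δ) lam) ∧
        (∀ lam ∈ Ico (0:ℝ) δ, HasDerivWithinAt ψ' (ψ'' lam) (Ico (0:ℝ) δ) lam) := by
  rintro ⟨δ, hδ, E, ψ, E', ψ', E'', ψ'', hE0, hψ00, hEigEq, hEd, hψd, -, -⟩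
  set s : Set ℝ := Ico (0:ℝ) δ with hs
  have h0 : (0:ℝ) ∈ s := ⟨le_refl 0, hδ⟩
  set v : ℋ := ψ' 0 with hv
  set a : ℝ := E' 0 with hadef
  have hHsym := ContinuousLinearMap.isSelfAdjoint_iff_isSymmetric.mp hH
  have hHsym' : ∀ x y : ℋ, (inner ℂ (H x) y : ℂ) = inner ℂ x (H y) := fun x y => hHsym x y
  -- differentiate the eigenvalue equation at 0
  have hψd0 : HasDerivWithinAt ψ v s 0 := hψd 0 h0
  have hEd0 : HasDerivWithinAt E a s 0 := hEd 0 h0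
  have hd1 : HasDerivWithinAt (fun lam => H (ψ lam)) (H v) s 0 := by
    simpa [Function.comp_def] using
      ((H.restrictScalars ℝ).hasFDerivAt).comp_hasDerivWithinAt 0 hψd0
  have hWd : HasDerivWithinAt (fun lam => W (ψ lam)) (W v) s 0 := by
    simpa [Function.comp_def] using
      ((W.restrictScalars ℝ).hasFDerivAt).comp_hasDerivWithinAt 0 hψd0
  have hcoe : HasDerivWithinAt (fun lam : ℝ => (lam : ℂ)) 1 s 0 := by
    have := (Complex.ofRealCLM.hasDerivAt (x := (0:ℝ))).hasDerivWithinAt (s := s)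
    simp at this; exact this
  have hd2 : HasDerivWithinAt (fun lam : ℝ => (lam:ℂ) • W (ψ lam)) (W ψ₀) s 0 := by
    have := hcoe.smul hWd
    simp [hψ00] at this; exact this
  have hEc : HasDerivWithinAt (fun lam => ((E lam : ℂ))) ((a:ℂ)) s 0 := by
    have := (Complex.ofRealCLM.hasFDerivAt).comp_hasDerivWithinAt 0 hEd0
    simpa [Function.comp_def] using this
  have hd3 : HasDerivWithinAt (fun lam => (E lam : ℂ) • ψ lam)
      ((E₀:ℂ) • v + (a:ℂ) • ψ₀) s 0 := by
    have := hEc.smul hψd0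
    simp [hE0, hψ00] at this; exact this
  have hG' : HasDerivWithinAt
      (fun lam => (H (ψ lam) + (lam:ℂ) • W (ψ lam)) - (E lam : ℂ) • ψ lam)
      (H v + W ψ₀ - ((E₀:ℂ) • v + (a:ℂ) • ψ₀)) s 0 := (hd1.add hd2).sub hd3
  have hG0 : ∀ y ∈ s, (H (ψ y) + (y:ℂ) • W (ψ y)) - (E y : ℂ) • ψ y = (fun _ : ℝ => (0:ℋ)) y := by
    intro y hy
    have h := hEigEq y hy
    simp only [ContinuousLinearMap.add_apply, ContinuousLinearMap.smul_apply] at h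
    show H (ψ y) + (y:ℂ) • W (ψ y) - (E y : ℂ) • ψ y = 0
    rw [h, sub_self]
  have hGzero : HasDerivWithinAt
      (fun lam => (H (ψ lam) + (lam:ℂ) • W (ψ lam)) - (E lam : ℂ) • ψ lam) 0 s 0 :=
    (hasDerivWithinAt_const 0 s (0:ℋ)).congr hG0 (hG0 0 h0)
  have hUD : UniqueDiffWithinAt ℝ s 0 := (uniqueDiffOn_Ico 0 δ) 0 h0
  have hDkey : H v + W ψ₀ - ((E₀:ℂ) • v + (a:ℂ) • ψ₀) = 0 := by
    have h1 := hG'.derivWithin hUD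
    have h2 := hGzero.derivWithin hUD
    rw [h1] at h2; exact h2
  have key : H v + W ψ₀ = (E₀:ℂ) • v + (a:ℂ) • ψ₀ := sub_eq_zero.mp hDkey
  -- first order coefficient:  ⟪ψ₀, W ψ₀⟫ = a
  have hip1 : (inner ℂ ψ₀ (H v) : ℂ) = (E₀:ℂ) * inner ℂ ψ₀ v := by
    rw [← hHsym', hEig, inner_smul_left, Complex.conj_ofReal]
  have hnorm1 : (inner ℂ ψ₀ ψ₀ : ℂ) = 1 := by
    rw [inner_self_eq_norm_sq_to_K, hψ₀]; norm_num
  have ha : (inner ℂ ψ₀ (W ψ₀) : ℂ) = (a:ℂ) := by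
    have h := congrArg (fun z : ℋ => (inner ℂ ψ₀ z : ℂ)) key
    simp only [inner_add_right, inner_smul_right, hip1, hnorm1, mul_one] at h
    exact add_left_cancel h
  -- φ lies in the range of A = H - E₀
  set A : ℋ →L[ℂ] ℋ := H - (E₀:ℂ) • 1 with hAdef
  have hAapp : ∀ x : ℋ, A x = H x - (E₀:ℂ) • x := by
    intro x; simp [hAdef]
  set u : ℋ := -v with hu
  set φ : ℋ := W ψ₀ - (inner ℂ ψ₀ (W ψ₀) : ℂ) • ψ₀ with hφ
  have hAu : A u = φ := by
    have hHv : H v = (E₀:ℂ) • v + (a:ℂ) • ψ₀ - W ψ₀ := by rw [← key]; abel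
    rw [hφ, ha, hu, map_neg, hAapp, hHv]
    abel
  have hAsym : ∀ x y : ℋ, (inner ℂ (A x) y : ℂ) = inner ℂ x (A y) := by
    intro x y
    simp only [hAapp, inner_sub_left, inner_sub_right, inner_smul_left, inner_smul_right,
      Complex.conj_ofReal, hHsym' x y]
  have hAreal : ∀ x : ℋ, (inner ℂ (A x) x : ℂ).im = 0 := by
    intro x
    have h1 : (starRingEnd ℂ) (inner ℂ (A x) x : ℂ) = inner ℂ (A x) x := by
      rw [inner_conj_symm, hAsym]
    have := Complex.conj_eq_iff_im.mp h1
    exact this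
  -- main estimate
  have hbound : ∀ ε : ℝ, 0 < ε →
      ‖(inner ℂ φ (R ε φ) : ℂ) - inner ℂ φ u‖ ≤ 2 * ε * ‖u‖^2 := by
    intro ε hε
    set B : ℋ →L[ℂ] ℋ := H - ((E₀ : ℂ) + (ε : ℂ) * Complex.I) • (1 : ℋ →L[ℂ] ℋ) with hBdef
    have hBapp : ∀ x : ℋ, B x = A x - ((ε:ℂ) * Complex.I) • x := by
      intro x
      simp only [hBdef, hAapp, ContinuousLinearMap.sub_apply, ContinuousLinearMap.smul_apply,
        ContinuousLinearMap.one_apply, ContinuousLinearMap.add_apply, add_smul]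
      abel
    have hBR : ∀ x : ℋ, B (R ε x) = x := by
      intro x
      have h := (hR ε hε).1
      calc B (R ε x) = ((B * R ε) : ℋ →L[ℂ] ℋ) x := rfl
        _ = x := by rw [h]; rfl
    have hRB : ∀ x : ℋ, R ε (B x) = x := by
      intro x
      have h := (hR ε hε).2
      calc R ε (B x) = ((R ε * B) : ℋ →L[ℂ] ℋ) x := rfl
        _ = x := by rw [h]; rfl
    have hRA : ∀ x : ℋ, R ε (A x) = x + ((ε:ℂ) * Complex.I) • R ε x := by
      intro x
      have hx : A x = B x + ((ε:ℂ) * Complex.I) • x := by rw [hBapp]; abel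
      rw [hx, map_add, map_smul, hRB]
    have hAR : ∀ x : ℋ, A (R ε x) = x + ((ε:ℂ) * Complex.I) • R ε x := by
      intro x
      have := hBapp (R ε x)
      have h2 : A (R ε x) = B (R ε x) + ((ε:ℂ) * Complex.I) • R ε x := by rw [this]; abel
      rw [h2, hBR]
    -- resolvent norm bound
    have hRnorm : ∀ y : ℋ, ε * ‖R ε y‖ ≤ ‖y‖ := by
      intro y
      have hx : B (R ε y) = A (R ε y) - ((ε:ℂ) * Complex.I) • R ε y := hBapp _
      set x := R ε y with hxdef
      have hre : (RCLike.re (inner ℂ (A x) (((ε:ℂ) * Complex.I) • x) : ℂ) : ℝ) = 0 := by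
        rw [inner_smul_right]
        simp [Complex.mul_re, Complex.mul_im, hAreal x]
      have hsm : ‖((ε:ℂ) * Complex.I) • x‖ = ε * ‖x‖ := by
        rw [norm_smul]
        simp [abs_of_pos hε]
      have h2 : ‖B x‖^2 = ‖A x‖^2 + (ε * ‖x‖)^2 := by
        rw [hx, @norm_sub_sq ℂ, hre, hsm]; ring
      have h3 : (ε * ‖x‖)^2 ≤ ‖B x‖^2 := by nlinarith [sq_nonneg ‖A x‖]
      have h4 : ε * ‖x‖ ≤ ‖B x‖ := by
        nlinarith [norm_nonneg (B x), norm_nonneg x, mul_nonneg hε.le (norm_nonneg x)]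
      rwa [hBR] at h4
    -- expand the inner ℂ product
    have hexp : (inner ℂ φ (R ε φ) : ℂ) - inner ℂ φ u =
        ((ε:ℂ) * Complex.I) * ((inner ℂ u u : ℂ) + ((ε:ℂ) * Complex.I) * inner ℂ u (R ε u)) := by
      have h1 : R ε φ = u + ((ε:ℂ) * Complex.I) • R ε u := by rw [← hAu, hRA]
      have h2 : (inner ℂ φ (R ε u) : ℂ) = (inner ℂ u u : ℂ) + ((ε:ℂ) * Complex.I) * inner ℂ u (R ε u) := by
        rw [← hAu, hAsym, hAR, inner_add_right, inner_smul_right]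
      rw [h1, inner_add_right, inner_smul_right, h2]
      ring
    rw [hexp]
    have hIu : ‖(inner ℂ u u : ℂ)‖ ≤ ‖u‖^2 := by
      rw [inner_self_eq_norm_sq_to_K]
      simp
    have hIRu : ‖(inner ℂ u (R ε u) : ℂ)‖ ≤ ‖u‖ * ‖R ε u‖ := norm_inner_le_norm u (R ε u)
    have hεI : ‖(ε:ℂ) * Complex.I‖ = ε := by simp [abs_of_pos hε]
    calc ‖((ε:ℂ) * Complex.I) * ((inner ℂ u u : ℂ) + ((ε:ℂ) * Complex.I) * inner ℂ u (R ε u))‖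
        = ε * ‖(inner ℂ u u : ℂ) + ((ε:ℂ) * Complex.I) * inner ℂ u (R ε u)‖ := by
          rw [norm_mul, hεI]
      _ ≤ ε * (‖(inner ℂ u u : ℂ)‖ + ‖((ε:ℂ) * Complex.I) * inner ℂ u (R ε u)‖) := by
          gcongr; exact norm_add_le _ _
      _ = ε * (‖(inner ℂ u u : ℂ)‖ + ε * ‖(inner ℂ u (R ε u) : ℂ)‖) := by rw [norm_mul, hεI]
      _ ≤ ε * (‖u‖^2 + ε * (‖u‖ * ‖R ε u‖)) := by gcongr
      _ = ε * ‖u‖^2 + ‖u‖ * (ε * ‖R ε u‖) * ε := by ring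
      _ ≤ ε * ‖u‖^2 + ‖u‖ * ‖u‖ * ε := by gcongr; exact hRnorm u
      _ = 2 * ε * ‖u‖^2 := by ring
  -- conclude
  have htend : Tendsto (fun ε : ℝ => (inner ℂ φ (R ε φ) : ℂ)) (𝓝[>] (0:ℝ))
      (𝓝 (inner ℂ φ u : ℂ)) := by
    have h0' : Tendsto (fun ε : ℝ => (inner ℂ φ (R ε φ) : ℂ) - inner ℂ φ u) (𝓝[>] (0:ℝ)) (𝓝 0) := by
      apply squeeze_zero_norm' (a := fun ε : ℝ => 2 * ε * ‖u‖^2)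
      · filter_upwards [self_mem_nhdsWithin] with ε hε
        exact hbound ε hε
      · have h1 : Tendsto (fun ε : ℝ => 2 * ε * ‖u‖^2) (𝓝 (0:ℝ)) (𝓝 (2 * 0 * ‖u‖^2)) := by
          exact ((tendsto_id.const_mul 2).mul_const (‖u‖^2))
        simpa using h1.mono_left nhdsWithin_le_nhds
    have := h0'.add (tendsto_const_nhds (x := (inner ℂ φ u : ℂ)))
    simpa using this
  have hℓeq : ℓ = (inner ℂ φ u : ℂ) := tendsto_nhds_unique hlim htend
  have him : (inner ℂ φ u : ℂ).im = 0 := by rw [← hAu]; exact hAreal u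
  rw [hℓeq] at hℓ
  exact hℓ him
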